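/- Let G be a finite connected k-regular simple graph with n vertices and m edges, where k ≥ 2. Then the characteristic polynomial of U⁺ over ℂ factors as char(U⁺)(X) = (X² − 1)^{m−n} · ∏_{λ_A} (X² − λ_A·X + (k − 1)), where the product runs over the multiset of roots λ_A (with multiplicity) of the characteristic polynomial of the adjacency matrix A(G) over ℂ. (Theorem 5.1, stated as a polynomial factorization.) -/

import Mathlib

open Matrix SimpleGraph Polynomial

/-- The transition matrix `U` (over `ℝ`) of the discrete-time quantum walk on `G`, indexed
by darts: `U e f = 2 / deg (t f)` if `t f = o e` and `f ≠ e⁻¹`, `U e f = 2 / deg (t f) - 1`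
if `f = e⁻¹`, and `0` otherwise. -/
noncomputable def quantumUR {V : Type*} [Fintype V] (G : SimpleGraph V)
    [DecidableRel G.Adj] [DecidableEq V] : Matrix G.Dart G.Dart ℝ :=
  fun e f =>
    if f.toProd.2 = e.toProd.1 ∧ f ≠ e.symm then (2 : ℝ) / (G.degree f.toProd.2 : ℝ)
    else if f = e.symm then (2 : ℝ) / (G.degree f.toProd.2 : ℝ) - 1
    else 0

/-- The positive support of a real matrix, viewed as a matrix over a semiring `R`:
entry `1` where the original entry is positive, `0` otherwise. -/
noncomputable def posSupport {α : Type*} (R : Type*) [Zero R] [One R]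
    (F : Matrix α α ℝ) : Matrix α α R :=
  fun i j => if 0 < F i j then 1 else 0


set_option synthInstance.maxHeartbeats 1000000
set_option maxHeartbeats 1000000

namespace Stmt10Aux

variable {V : Type*} [Fintype V] [DecidableEq V] (G : SimpleGraph V) [DecidableRel G.Adj]
variable (R : Type*)

/-- origin incidence matrix -/
noncomputable def Smat [Zero R] [One R] : Matrix G.Dart V R :=
  fun e v => if e.toProd.1 = v then 1 else 0

/-- terminus incidence matrix -/
noncomputable def Tmat [Zero R] [One R] : Matrix G.Dart V R :=
  fun e v => if e.toProd.2 = v then 1 else 0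

/-- dart reversal matrix -/
noncomputable def Jmat [Zero R] [One R] : Matrix G.Dart G.Dart R :=
  fun e f => if f = e.symm then 1 else 0

/-- nonbacktracking matrix -/
noncomputable def Bmat [Zero R] [One R] : Matrix G.Dart G.Dart R :=
  fun e f => if f.toProd.2 = e.toProd.1 ∧ f ≠ e.symm then 1 else 0

variable [CommRing R]

lemma Bmat_eq : Bmat G R = Smat G R * (Tmat G R)ᵀ - Jmat G R := by
  ext e f
  simp only [Bmat, Smat, Tmat, Jmat, Matrix.sub_apply, Matrix.mul_apply, Matrix.transpose_apply]
  rw [Finset.sum_eq_single e.toProd.1 (by intro v _ hv; simp [if_neg (Ne.symm hv)])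
    (by simp)]
  by_cases h1 : f.toProd.2 = e.toProd.1 <;> by_cases h2 : f = e.symm <;>
    simp_all [SimpleGraph.Dart.symm]

lemma Tmat_transpose_mul_Jmat : (Tmat G R)ᵀ * Jmat G R = (Smat G R)ᵀ := by
  ext v e
  simp only [Smat, Tmat, Jmat, Matrix.mul_apply, Matrix.transpose_apply]
  rw [Finset.sum_eq_single e.symm (by
    intro f _ hf
    have hne : e ≠ f.symm := fun h => hf (by rw [h, SimpleGraph.Dart.symm_symm])
    simp [hne]) (by simp)]
  simp [SimpleGraph.Dart.symm]
  rfl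

lemma Jmat_mul_Jmat : Jmat G R * Jmat G R = 1 := by
  ext e g
  simp only [Jmat, Matrix.mul_apply, Matrix.one_apply]
  rw [Finset.sum_eq_single e.symm (by intro f _ hf; simp [if_neg hf]) (by simp)]
  by_cases h : g = e
  · simp [h, SimpleGraph.Dart.symm_symm]
  · have h2 : g ≠ e.symm.symm := by rw [SimpleGraph.Dart.symm_symm]; exact h
    have h3 : e ≠ g := fun he => h he.symm
    simp [h2, h3, h]

lemma Tmat_transpose_mul_Smat : (Tmat G R)ᵀ * Smat G R = G.adjMatrix R := by
  ext u v
  simp only [Tmat, Smat, Matrix.mul_apply, Matrix.transpose_apply, SimpleGraph.adjMatrix_apply]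
  by_cases h : G.Adj u v
  · rw [Finset.sum_eq_single (SimpleGraph.Dart.mk (v, u) h.symm)]
    · simp [h]
    · intro f _ hf
      rcases Decidable.eq_or_ne f.toProd.2 u with h1 | h1
      · rcases Decidable.eq_or_ne f.toProd.1 v with h2 | h2
        · exact absurd (SimpleGraph.Dart.ext _ _ (Prod.ext h2 h1)) hf
        · simp [h2]
      · simp [h1]
    · simp
  · rw [if_neg h]
    apply Finset.sum_eq_zero
    intro f _
    rcases Decidable.eq_or_ne f.toProd.2 u with h1 | h1
    · rcases Decidable.eq_or_ne f.toProd.1 v with h2 | h2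
      · exact absurd (h1 ▸ h2 ▸ f.adj.symm) h
      · simp [h2]
    · simp [h1]

lemma Smat_transpose_mul_Smat {k : ℕ} (hreg : G.IsRegularOfDegree k) :
    (Smat G R)ᵀ * Smat G R = (k : R) • 1 := by
  ext u v
  simp only [Smat, Matrix.mul_apply, Matrix.transpose_apply, Matrix.smul_apply,
    Matrix.one_apply, smul_eq_mul]
  by_cases h : u = v
  · subst h
    simp only [if_pos rfl, mul_one]
    have : ∀ f : G.Dart, ((if f.toProd.1 = u then (1:R) else 0) * (if f.toProd.1 = u then (1:R) else 0)) = if f.fst = u then (1:R) else 0 := by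
      intro f; by_cases hf : f.toProd.1 = u <;> simp [hf]
    rw [Finset.sum_congr rfl fun f _ => this f, Finset.sum_boole]
    have := G.dart_fst_fiber_card_eq_degree u
    rw [show ({d : G.Dart | d.fst = u} : Finset _) = Finset.univ.filter (fun d => d.fst = u) from rfl] at this
    rw [this, hreg u]
    simp
  · rw [if_neg h, mul_zero]
    apply Finset.sum_eq_zero
    intro f _
    rcases Decidable.eq_or_ne f.toProd.1 u with h1 | h1
    · rw [if_neg (fun h2 : f.toProd.1 = v => h (h1 ▸ h2)), mul_zero]
    · rw [if_neg h1, zero_mul]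


lemma key1 (x : R) :
    (x • 1 - Bmat G R) * (x • 1 - Jmat G R)
      = (x ^ 2 - 1) • (1 : Matrix G.Dart G.Dart R)
        - Smat G R * (x • (Tmat G R)ᵀ - (Smat G R)ᵀ) := by
  have h1 : (Smat G R * (Tmat G R)ᵀ) * Jmat G R = Smat G R * (Smat G R)ᵀ := by
    rw [Matrix.mul_assoc, Tmat_transpose_mul_Jmat]
  have h4 : Smat G R * (x • (Tmat G R)ᵀ - (Smat G R)ᵀ)
      = x • (Smat G R * (Tmat G R)ᵀ) - Smat G R * (Smat G R)ᵀ := by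
    rw [Matrix.mul_sub, Matrix.mul_smul]
  rw [Bmat_eq, h4, sub_mul, mul_sub, mul_sub, sub_mul, sub_mul, h1, Jmat_mul_Jmat,
    smul_mul_assoc, smul_mul_assoc, mul_smul_comm, mul_smul_comm, one_mul, mul_one,
    smul_smul, ← pow_two, sub_smul, one_smul]
  simp only [one_mul, mul_one, mul_smul_comm, smul_mul_assoc]
  abel

lemma det_smul_one_sub_mul {K : Type*} [Field K] {α β : Type*} [Fintype α] [Fintype β]
    [DecidableEq α] [DecidableEq β] (hc : Fintype.card β ≤ Fintype.card α)
    {a : K} (ha : a ≠ 0) (S : Matrix α β K) (N : Matrix β α K) :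
    det (a • (1 : Matrix α α K) - S * N) =
      a ^ (Fintype.card α - Fintype.card β) * det (a • (1 : Matrix β β K) - N * S) := by
  have h1 : a • (1 : Matrix α α K) - S * N = a • ((1 : Matrix α α K) - S * (a⁻¹ • N)) := by
    rw [smul_sub, Matrix.mul_smul, smul_smul, mul_inv_cancel₀ ha, one_smul]
  have h2 : (1 : Matrix β β K) - (a⁻¹ • N) * S = a⁻¹ • (a • (1 : Matrix β β K) - N * S) := by
    rw [Matrix.smul_mul, smul_sub, smul_smul, inv_mul_cancel₀ ha, one_smul]
  rw [h1, det_smul, det_one_sub_mul_comm, h2, det_smul, pow_sub₀ a ha hc, inv_pow]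
  field_simp


section MapLemmas

variable {R' : Type*} [CommRing R'] (phi : R →+* R')

lemma Smat_map : (Smat G R).map phi = Smat G R' := by
  ext e v; simp [Smat, Matrix.map_apply, apply_ite phi]

lemma Tmat_map : (Tmat G R).map phi = Tmat G R' := by
  ext e v; simp [Tmat, Matrix.map_apply, apply_ite phi]

lemma Jmat_map : (Jmat G R).map phi = Jmat G R' := by
  ext e f; simp [Jmat, Matrix.map_apply, apply_ite phi]

lemma Bmat_map : (Bmat G R).map phi = Bmat G R' := by
  ext e f; simp [Bmat, Matrix.map_apply, apply_ite phi]

lemma adjMatrix_map : (G.adjMatrix R).map phi = G.adjMatrix R' := by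
  ext u v; simp [Matrix.map_apply, apply_ite phi]

lemma matrix_map_smul {a b : Type*} (c : R) (M : Matrix a b R) :
    (c • M).map phi = phi c • M.map phi := by
  ext i j; simp [Matrix.map_apply]

lemma matrix_map_add {a b : Type*} (M N : Matrix a b R) :
    (M + N).map phi = M.map phi + N.map phi := by
  ext i j; simp [Matrix.map_apply]

lemma matrix_map_sub {a b : Type*} (M N : Matrix a b R) :
    (M - N).map phi = M.map phi - N.map phi :=
  Matrix.map_sub phi (by simp) M N

lemma matrix_map_one {a : Type*} [Fintype a] [DecidableEq a] :
    (1 : Matrix a a R).map phi = 1 :=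
  Matrix.map_one phi (by simp) (by simp)

end MapLemmas

lemma charmatrix_eq {n : Type*} [Fintype n] [DecidableEq n] {S : Type*} [CommRing S]
    (M : Matrix n n S) :
    charmatrix M = (X : S[X]) • (1 : Matrix n n S[X]) - M.map C := by
  ext i j
  by_cases h : i = j <;>
    simp [charmatrix_apply, Matrix.smul_apply, Matrix.one_apply, Matrix.sub_apply,
      Matrix.map_apply, Matrix.diagonal_apply, h]

lemma eval_matrix_sub_eq {n : Type*} [Fintype n] [DecidableEq n] {S : Type*} [CommRing S]
    (M : Matrix n n S) (r : S) :
    (charmatrix M).map (evalRingHom r) = r • (1 : Matrix n n S) - M := by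
  ext i j
  by_cases h : i = j <;>
    simp [charmatrix_apply, Matrix.smul_apply, Matrix.one_apply, Matrix.sub_apply,
      Matrix.map_apply, Matrix.diagonal_apply, h]

lemma charpoly_eval {n : Type*} [Fintype n] [DecidableEq n] {S : Type*} [CommRing S]
    (M : Matrix n n S) (r : S) :
    (Matrix.charpoly M).eval r = (r • (1 : Matrix n n S) - M).det := by
  rw [Matrix.charpoly, ← eval_matrix_sub_eq M r,
    show (eval r M.charmatrix.det) = evalRingHom r M.charmatrix.det from rfl,
    RingHom.map_det, RingHom.mapMatrix_apply]


lemma charpoly_Jmat [Nonempty G.Dart] :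
    (Jmat G ℂ).charpoly = ((X : ℂ[X]) ^ 2 - 1) ^ G.edgeFinset.card := by
  classical
  have hJ2 : Jmat G ℂ * Jmat G ℂ = 1 := Jmat_mul_Jmat G ℂ
  have htr : Matrix.trace (Jmat G ℂ) = 0 := by
    rw [Matrix.trace]
    apply Finset.sum_eq_zero
    intro e _
    have he : e ≠ e.symm := (e.symm_ne).symm
    simp [Matrix.diag, Jmat, he]
  have hsplits : (Jmat G ℂ).charpoly.Splits :=
    IsAlgClosed.splits _
  have hsum : (Matrix.charpoly (Jmat G ℂ)).roots.sum = 0 := by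
    rw [← Matrix.trace_eq_sum_roots_charpoly]; exact htr
  have hcard : Multiset.card (Matrix.charpoly (Jmat G ℂ)).roots = Fintype.card G.Dart := by
    rw [splits_iff_card_roots.mp hsplits, Matrix.charpoly_natDegree_eq_dim]
  have hcardpos : Fintype.card G.Dart ≠ 0 := Fintype.card_ne_zero
  have hroot : ∀ r ∈ (Matrix.charpoly (Jmat G ℂ)).roots, r = 1 ∨ r = -1 := by
    intro r hr
    have h0 : (Matrix.charpoly (Jmat G ℂ)).eval r = 0 := isRoot_of_mem_roots hr
    rw [charpoly_eval] at h0
    have hprod : (r • (1 : Matrix G.Dart G.Dart ℂ) - Jmat G ℂ) * (r • 1 + Jmat G ℂ)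
        = (r ^ 2 - 1) • 1 := by
      rw [sub_mul, mul_add, mul_add, smul_mul_assoc, smul_mul_assoc, mul_smul_comm,
        mul_one, one_mul, hJ2, smul_smul, ← pow_two, sub_smul, one_smul,
        mul_smul_comm, mul_one]
      abel
    have hdet := congrArg Matrix.det hprod
    rw [Matrix.det_mul, h0, zero_mul, Matrix.det_smul, Matrix.det_one, mul_one] at hdet
    have h1 : r ^ 2 - 1 = 0 := (pow_eq_zero_iff hcardpos).mp hdet.symm
    have h2 : (r - 1) * (r + 1) = 0 := by linear_combination h1
    rcases mul_eq_zero.mp h2 with h | h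
    · exact Or.inl (sub_eq_zero.mp h)
    · exact Or.inr (eq_neg_of_add_eq_zero_left h)
  set Rts := (Matrix.charpoly (Jmat G ℂ)).roots with hRts
  have hfil : Rts.filter (fun r => r = 1) + Rts.filter (fun r => ¬ r = 1) = Rts :=
    Multiset.filter_add_not _ _
  set a := (Rts.filter (fun r => r = 1)).card with ha
  set b := (Rts.filter (fun r => ¬ r = 1)).card with hb
  have h1 : Rts.filter (fun r => r = 1) = Multiset.replicate a 1 :=
    Multiset.eq_replicate_card.mpr (fun x hx => (Multiset.mem_filter.mp hx).2)
  have h2 : Rts.filter (fun r => ¬ r = 1) = Multiset.replicate b (-1) :=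
    Multiset.eq_replicate_card.mpr (fun x hx => by
      rcases Multiset.mem_filter.mp hx with ⟨hx1, hx2⟩
      rcases hroot x hx1 with h | h
      · exact absurd h hx2
      · exact h)
  have hab : a + b = Fintype.card G.Dart := by
    have := congrArg Multiset.card hfil
    rw [Multiset.card_add] at this
    rw [ha, hb, this, hcard]
  have hsum2 : (a : ℂ) - (b : ℂ) = 0 := by
    have := congrArg Multiset.sum hfil
    rw [Multiset.sum_add, h1, h2, Multiset.sum_replicate, Multiset.sum_replicate, hRts,
      hsum] at this
    push_cast at this ⊢
    linear_combination this
  have habc : a = b := by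
    have : (a : ℂ) = (b : ℂ) := by linear_combination hsum2
    exact_mod_cast this
  have hd : Fintype.card G.Dart = 2 * G.edgeFinset.card := G.dart_card_eq_twice_card_edges
  have ham : a = G.edgeFinset.card := by omega
  have hbm : b = G.edgeFinset.card := by omega
  have hexp : (Jmat G ℂ).charpoly = (Rts.map (fun r => X - C r)).prod :=
    hsplits.eq_prod_roots_of_monic (Matrix.charpoly_monic _)
  rw [hexp, ← hfil, Multiset.map_add, Multiset.prod_add, h1, h2, Multiset.map_replicate,
    Multiset.map_replicate, Multiset.prod_replicate, Multiset.prod_replicate, ham, hbm,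
    ← mul_pow]
  congr 1
  rw [Polynomial.C_1, map_neg, Polynomial.C_1]
  ring


section Spectral

variable {n : Type*} [Fintype n] [DecidableEq n]

lemma det_smul_one_sub_smul_map {A : Matrix n n ℂ} (hA : A.IsHermitian) (p q : ℂ[X]) :
    Matrix.det (p • (1 : Matrix n n ℂ[X]) - q • A.map C)
      = ∏ i, (p - q * C ((hA.eigenvalues i : ℝ) : ℂ)) := by
  classical
  set U : Matrix n n ℂ := (hA.eigenvectorUnitary : Matrix n n ℂ) with hU
  have hU1 : U * star U = 1 := Matrix.mem_unitaryGroup_iff.mp hA.eigenvectorUnitary.2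
  have hsp : A = U * Matrix.diagonal (RCLike.ofReal ∘ hA.eigenvalues) * star U :=
    hA.spectral_theorem
  set D : Matrix n n ℂ[X] := Matrix.diagonal (fun i => C (((hA.eigenvalues i : ℝ) : ℂ))) with hD
  have hDmap : (Matrix.diagonal (RCLike.ofReal ∘ hA.eigenvalues) : Matrix n n ℂ).map C = D := by
    ext i j
    by_cases h : i = j <;> simp [Matrix.diagonal_apply, h, Matrix.map_apply, hD]
  have hU1m : U.map C * (star U).map C = 1 := by
    rw [← Matrix.map_mul, hU1, matrix_map_one]
  have hAmap : U.map C * D * (star U).map C = A.map C := by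
    conv_rhs => rw [hsp]
    rw [Matrix.map_mul, Matrix.map_mul, hDmap]
  have key : p • (1 : Matrix n n ℂ[X]) - q • A.map C
      = U.map C * (p • 1 - q • D) * (star U).map C := by
    rw [Matrix.mul_sub, Matrix.mul_smul, Matrix.mul_smul, mul_one, Matrix.sub_mul,
      Matrix.smul_mul, Matrix.smul_mul, hU1m, hAmap]
  have hdiag : p • (1 : Matrix n n ℂ[X]) - q • D
      = Matrix.diagonal (fun i => p - q * C (((hA.eigenvalues i : ℝ) : ℂ))) := by
    ext i j
    by_cases h : i = j <;>
      simp [hD, Matrix.diagonal_apply, h, Matrix.smul_apply, Matrix.one_apply,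
        Matrix.sub_apply]
  rw [key, Matrix.det_mul, Matrix.det_mul, mul_right_comm, ← Matrix.det_mul, hU1m,
    Matrix.det_one, one_mul, hdiag, Matrix.det_diagonal]

lemma charpoly_eq_prod {A : Matrix n n ℂ} (hA : A.IsHermitian) :
    A.charpoly = ∏ i, ((X : ℂ[X]) - C ((hA.eigenvalues i : ℝ) : ℂ)) := by
  have h := det_smul_one_sub_smul_map hA X 1
  simp only [one_smul, one_mul] at h
  rw [Matrix.charpoly, charmatrix_eq, h]

lemma charpoly_roots_eq {A : Matrix n n ℂ} (hA : A.IsHermitian) :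
    A.charpoly.roots = Finset.univ.val.map (fun i => ((hA.eigenvalues i : ℝ) : ℂ)) := by
  rw [charpoly_eq_prod hA]
  rw [Polynomial.roots_prod _ _ (by
    apply Polynomial.Monic.ne_zero
    exact monic_prod_of_monic _ _ (fun i _ => monic_X_sub_C _))]
  simp only [roots_X_sub_C]
  rw [Multiset.bind_singleton]

lemma roots_map_prod_eq {A : Matrix n n ℂ} (hA : A.IsHermitian) (c : ℂ) :
    (A.charpoly.roots.map (fun a => (X : ℂ[X]) ^ 2 - C a * X + C c)).prod
      = Matrix.det ((X ^ 2 : ℂ[X]) • (1 : Matrix n n ℂ[X]) - (X : ℂ[X]) • A.map C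
          + C c • 1) := by
  have h1 : (X ^ 2 : ℂ[X]) • (1 : Matrix n n ℂ[X]) - (X : ℂ[X]) • A.map C + C c • 1
      = (X ^ 2 + C c : ℂ[X]) • (1 : Matrix n n ℂ[X]) - (X : ℂ[X]) • A.map C := by
    rw [add_smul]; abel
  rw [h1, det_smul_one_sub_smul_map hA, charpoly_roots_eq hA, Multiset.map_map,
    Finset.prod_eq_multiset_prod]
  apply congrArg
  apply Multiset.map_congr rfl
  intro i _
  simp only [Function.comp_apply]
  ring

end Spectral


lemma adj_isHermitian : (G.adjMatrix ℂ).IsHermitian := by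
  show (G.adjMatrix ℂ)ᴴ = G.adjMatrix ℂ
  ext i j
  simp only [Matrix.conjTranspose_apply, SimpleGraph.adjMatrix_apply]
  by_cases h : G.Adj i j
  · rw [if_pos h, if_pos h.symm]; simp
  · rw [if_neg h, if_neg (fun hs => h hs.symm)]; simp

lemma posSupport_eq {k : ℕ} (hreg : G.IsRegularOfDegree k) (hk : 2 ≤ k) :
    posSupport ℂ (quantumUR G) = Bmat G ℂ := by
  have hk0 : (0 : ℝ) < (k : ℝ) := by
    have : (0:ℕ) < k := lt_of_lt_of_le two_pos hk
    exact_mod_cast this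
  ext e f
  simp only [posSupport, quantumUR, Bmat]
  have hdeg : (G.degree f.toProd.2 : ℝ) = (k : ℝ) := by exact_mod_cast hreg f.toProd.2
  by_cases h1 : f.toProd.2 = e.toProd.1 ∧ f ≠ e.symm
  · have hlt : (0:ℝ) < 2 / (k:ℝ) := div_pos two_pos hk0
    simp [h1.1, h1.2, hdeg, hlt]
  · by_cases h2 : f = e.symm
    · have hle : ¬ (0:ℝ) < 2/(k:ℝ) - 1 := by
        rw [not_lt, sub_nonpos, div_le_one hk0]
        exact_mod_cast hk
      simp [h1, h2, hdeg, hle]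
    · have hA : ¬ f.toProd.2 = e.toProd.1 := fun hA => h1 ⟨hA, h2⟩
      simp [hA, h2]

end Stmt10Aux

open Stmt10Aux

theorem stmt10 {V : Type*} [Fintype V] [DecidableEq V] (G : SimpleGraph V)
    [DecidableRel G.Adj] (hconn : G.Connected) (k : ℕ)
    (hreg : G.IsRegularOfDegree k) (hk : 2 ≤ k) :
    (posSupport ℂ (quantumUR G)).charpoly =
      (X ^ 2 - 1) ^ (G.edgeFinset.card - Fintype.card V) *
        ((G.adjMatrix ℂ).charpoly.roots.map
          (fun a => X ^ 2 - C a * X + C ((k : ℂ) - 1))).prod := by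
  classical
  have hV : Nonempty V := hconn.nonempty
  have hd2m : Fintype.card G.Dart = 2 * G.edgeFinset.card := G.dart_card_eq_twice_card_edges
  have hsumdeg : ∑ v, G.degree v = Fintype.card V * k := by
    rw [Finset.sum_congr rfl (fun v _ => hreg v), Finset.sum_const, Finset.card_univ,
      smul_eq_mul]
  have hnk : Fintype.card V * k = 2 * G.edgeFinset.card := by
    rw [← hsumdeg]; exact G.sum_degrees_eq_twice_card_edges
  have h2n : Fintype.card V * 2 ≤ Fintype.card V * k := Nat.mul_le_mul_left _ hk
  have hnm : Fintype.card V ≤ G.edgeFinset.card := by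
    rw [hnk] at h2n; omega
  have hmpos : 0 < G.edgeFinset.card := by
    have h1 : 1 * 2 ≤ Fintype.card V * k := Nat.mul_le_mul Fintype.card_pos hk
    rw [hnk] at h1; omega
  have hDart : Nonempty G.Dart := by
    apply Fintype.card_pos_iff.mp
    rw [hd2m]; omega
  have hX21 : ((X:ℂ[X])^2 - 1) ≠ 0 := by
    intro h
    have := congrArg (eval 0) h
    simp at this
  -- the Q matrix over ℂ[X]
  set Q : Matrix V V ℂ[X] :=
    (X^2 : ℂ[X]) • 1 - (X:ℂ[X]) • (G.adjMatrix ℂ[X]) + ((k:ℂ[X]) - 1) • 1 with hQ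
  have hkC : ((k:ℂ[X]) - 1) = C ((k:ℂ) - 1) := by
    rw [_root_.map_sub, _root_.map_one, _root_.map_natCast]
  have hQP : Q.det
      = ((G.adjMatrix ℂ).charpoly.roots.map
          (fun a => (X:ℂ[X]) ^ 2 - C a * X + C ((k : ℂ) - 1))).prod := by
    rw [roots_map_prod_eq (adj_isHermitian G) ((k:ℂ) - 1), hQ, adjMatrix_map G ℂ
      (C : ℂ →+* ℂ[X]), hkC]
  have hchB : (Bmat G ℂ).charpoly = Matrix.det ((X:ℂ[X]) • 1 - Bmat G ℂ[X]) := by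
    rw [Matrix.charpoly, charmatrix_eq, Bmat_map G ℂ (C : ℂ →+* ℂ[X])]
  have hchJ : Matrix.det ((X:ℂ[X]) • 1 - Jmat G ℂ[X]) = ((X:ℂ[X])^2 - 1)^G.edgeFinset.card := by
    rw [← Jmat_map G ℂ (C : ℂ →+* ℂ[X]), ← charmatrix_eq, ← Matrix.charpoly, charpoly_Jmat]
  -- Sylvester via RatFunc
  set φ : ℂ[X] →+* RatFunc ℂ := algebraMap ℂ[X] (RatFunc ℂ) with hφ
  have hφinj : Function.Injective φ := RatFunc.algebraMap_injective ℂ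
  have haz : φ ((X:ℂ[X])^2 - 1) ≠ 0 := RatFunc.algebraMap_ne_zero hX21
  have hcards : Fintype.card V ≤ Fintype.card G.Dart := by rw [hd2m]; omega
  have hsyl := det_smul_one_sub_mul hcards haz (Smat G (RatFunc ℂ))
    ((φ X) • (Tmat G (RatFunc ℂ))ᵀ - (Smat G (RatFunc ℂ))ᵀ)
  have hNS : ((φ X) • (Tmat G (RatFunc ℂ))ᵀ - (Smat G (RatFunc ℂ))ᵀ) * Smat G (RatFunc ℂ)
      = (φ X) • (G.adjMatrix (RatFunc ℂ)) - (k:(RatFunc ℂ)) • (1 : Matrix V V (RatFunc ℂ)) := by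
    rw [Matrix.sub_mul, Matrix.smul_mul, Tmat_transpose_mul_Smat,
      Smat_transpose_mul_Smat G (RatFunc ℂ) hreg]
  have hmapM : ((((X:ℂ[X])^2 - 1) • (1 : Matrix G.Dart G.Dart ℂ[X])
        - Smat G ℂ[X] * ((X:ℂ[X]) • (Tmat G ℂ[X])ᵀ - (Smat G ℂ[X])ᵀ)).map φ)
      = φ ((X:ℂ[X])^2 - 1) • 1
        - Smat G (RatFunc ℂ) * ((φ X) • (Tmat G (RatFunc ℂ))ᵀ - (Smat G (RatFunc ℂ))ᵀ) := by
    rw [matrix_map_sub, matrix_map_smul, matrix_map_one, Matrix.map_mul, Smat_map,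
      matrix_map_sub, matrix_map_smul, Matrix.transpose_map, Matrix.transpose_map,
      Smat_map, Tmat_map]
  have hmapQ : Q.map φ
      = (φ X)^2 • 1 - (φ X) • (G.adjMatrix (RatFunc ℂ)) + ((k:(RatFunc ℂ)) - 1) • 1 := by
    rw [hQ, matrix_map_add, matrix_map_sub, matrix_map_smul, matrix_map_smul,
      matrix_map_smul, matrix_map_one, adjMatrix_map G ℂ[X] φ, _root_.map_pow,
      _root_.map_sub, _root_.map_natCast, _root_.map_one]
  have hinner : φ ((X:ℂ[X])^2 - 1) • (1 : Matrix V V (RatFunc ℂ))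
      - ((φ X) • (Tmat G (RatFunc ℂ))ᵀ - (Smat G (RatFunc ℂ))ᵀ) * Smat G (RatFunc ℂ)
      = Q.map φ := by
    rw [hNS, hmapQ, _root_.map_sub, _root_.map_one, _root_.map_pow, sub_smul, one_smul, sub_smul, one_smul]
    abel
  have h3 : Matrix.det (((X:ℂ[X])^2 - 1) • (1:Matrix G.Dart G.Dart ℂ[X])
        - Smat G ℂ[X] * ((X:ℂ[X]) • (Tmat G ℂ[X])ᵀ - (Smat G ℂ[X])ᵀ))
      = ((X:ℂ[X])^2 - 1) ^ (Fintype.card G.Dart - Fintype.card V) * Q.det := by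
    apply hφinj
    rw [_root_.map_mul, _root_.map_pow, RingHom.map_det, RingHom.map_det, RingHom.mapMatrix_apply,
      RingHom.mapMatrix_apply, hmapM, hsyl, hinner]
  have hmain : (Bmat G ℂ).charpoly * ((X:ℂ[X])^2 - 1)^G.edgeFinset.card
      = ((X:ℂ[X])^2 - 1) ^ (Fintype.card G.Dart - Fintype.card V)
        * ((G.adjMatrix ℂ).charpoly.roots.map
            (fun a => (X:ℂ[X]) ^ 2 - C a * X + C ((k : ℂ) - 1))).prod := by
    rw [hchB, ← hchJ, ← Matrix.det_mul, key1, h3, hQP]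
  rw [posSupport_eq G hreg hk]
  have hexp : Fintype.card G.Dart - Fintype.card V
      = (G.edgeFinset.card - Fintype.card V) + G.edgeFinset.card := by omega
  rw [hexp, pow_add] at hmain
  apply mul_right_cancel₀ (pow_ne_zero G.edgeFinset.card hX21)
  rw [hmain]
  ring
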